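/- For every infinite regular cardinal κ and every almost disjoint family E = {e_α : α < 2^κ} of subsets of κ of size κ, there exists a subset A ⊆ 2^κ such that no x ⊆ κ depicts (A,E). Consequently the characteristic ap_κ (the least λ admitting an almost disjoint family of size λ with an indepictable pair) is well-defined and ap_κ ≤ 2^κ. -/
import Mathlib


open Cardinal Set
universe u

/-- `x ⊆ κ` depicts the pair `(A, E)`. -/
def Depicts {α : Type*} {ι : Type*} (e : ι → Set α) (A : Set ι) (x : Set α) : Prop :=
  ∀ i : ι, #↥(e i ∩ x) = #α ↔ i ∈ A

/-- For every infinite regular `κ` and every almost disjoint family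
`E = {e_α : α < 2^κ}` of subsets of `κ` of size `κ`, there is `A ⊆ 2^κ` such that no
`x ⊆ κ` depicts `(A,E)`.  In particular `ap_κ` is well-defined and `ap_κ ≤ 2^κ`. -/
theorem exists_indepictable {α ι : Type u}
    [Infinite α] (hreg : (#α).IsRegular)
    (hι : #ι = 2 ^ #α)
    (e : ι → Set α)
    (hsize : ∀ i : ι, #↥(e i) = #α)
    (had : ∀ i j : ι, i ≠ j → #↥(e i ∩ e j) < #α) :
    ∃ A : Set ι, ∀ x : Set α, ¬ Depicts e A x := by
  by_contra h
  push_neg at h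
  have hsurj : Function.Surjective (fun x : Set α => {i | #↥(e i ∩ x) = #α}) := by
    intro A
    obtain ⟨x, hx⟩ := h A
    exact ⟨x, Set.ext fun i => hx i⟩
  have h1 : #(Set ι) ≤ #(Set α) := Cardinal.mk_le_of_surjective hsurj
  rw [Cardinal.mk_set, Cardinal.mk_set, hι] at h1
  exact absurd h1 (not_le.mpr (Cardinal.cantor _))
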